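/- Let f, g, h ∈ F with g obtained from f by a legal move of weight zero starting at the p-th largest element of f⁻¹(×), and h obtained from f by a legal move of weight zero starting at the r-th largest element of f⁻¹(×), with p < r. Then g and h are not connected by a legal move of weight zero (in either direction). -/

import Mathlib

namespace KacComb

/-- Core-free diagrams: functions from `ℤ` to `{×, ∘}`, with `true` = `×`. -/
abbrev F : Type := ℤ → Bool

/-- `tally f b c` = number of `×`'s minus number of `∘`'s of `f` strictly between `b` and `c`. -/
noncomputable def tally (f : F) (b c : ℤ) : ℤ :=
  (((Finset.Ioo b c).filter fun x => f x = true).card : ℤ) -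
    (((Finset.Ioo b c).filter fun x => f x = false).card : ℤ)

/-- `move f a b` = `f^a_b`: replace the `×` at `a` by `∘` and the `∘` at `b` by `×`. -/
def move (f : F) (a b : ℤ) : F :=
  Function.update (Function.update f a false) b true

/-- The move `f ↦ f^a_b` (start `a`, end `b`) is legal. -/
def IsLegal (f : F) (a b : ℤ) : Prop :=
  b < a ∧ f a = true ∧ f b = false ∧ ∀ c : ℤ, b < c → c ≤ a → 0 ≤ tally f b c

/-- `g` is obtained from `f` by a legal move with start `a` and end `b`. -/
def LegalMove (f g : F) (a b : ℤ) : Prop :=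
  IsLegal f a b ∧ g = move f a b

/-- The cap diagram of `g` has a cap beginning at `b` and ending at `a`. -/
def HasCap (g : F) (b a : ℤ) : Prop :=
  b < a ∧ g b = true ∧ g a = false ∧ tally g b a = 0 ∧
    ∀ c : ℤ, b < c → c ≤ a → 0 ≤ tally g b c

/-- The cap diagram of `g` matches the weight diagram of `f`. -/
def Matches (g f : F) : Prop :=
  (∀ b a : ℤ, HasCap g b a →
      (f b = true ∧ f a = false) ∨ (f b = false ∧ f a = true)) ∧
  ∀ x : ℤ, f x = true → ∃ b a : ℤ, HasCap g b a ∧ (x = b ∨ x = a)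

/-- `P(f)`: the set of `g` whose cap diagram matches the weight diagram of `f`. -/
def Pset (f : F) : Set F := {g | Matches g f}


/-! ### Auxiliary lemmas -/

lemma move_ne (f : F) (a b x : ℤ) (h1 : x ≠ a) (h2 : x ≠ b) : move f a b x = f x := by
  simp [move, Function.update_apply, h1, h2]

lemma move_start (f : F) (a b : ℤ) (h : a ≠ b) : move f a b a = false := by
  simp [move, Function.update_apply, h]

lemma move_end (f : F) (a b : ℤ) : move f a b b = true := by
  simp [move, Function.update_apply]

lemma tally_congr (u v : F) (b c : ℤ) (h : ∀ x, b < x → x < c → u x = v x) :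
    tally u b c = tally v b c := by
  unfold tally
  have h1 : (Finset.Ioo b c).filter (fun x => u x = true)
      = (Finset.Ioo b c).filter (fun x => v x = true) := by
    apply Finset.filter_congr
    intro x hx
    rw [Finset.mem_Ioo] at hx
    rw [h x hx.1 hx.2]
  have h2 : (Finset.Ioo b c).filter (fun x => u x = false)
      = (Finset.Ioo b c).filter (fun x => v x = false) := by
    apply Finset.filter_congr
    intro x hx
    rw [Finset.mem_Ioo] at hx
    rw [h x hx.1 hx.2]
  rw [h1, h2]

lemma tally_eq_sum (f : F) (b c : ℤ) :
    tally f b c = ∑ x ∈ Finset.Ioo b c, (if f x = true then (1:ℤ) else -1) := by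
  unfold tally
  rw [Finset.sum_ite, Finset.sum_const, Finset.sum_const]
  ring_nf
  simp [Finset.filter_not]

lemma tally_split (f : F) (b m c : ℤ) (h1 : b < m) (h2 : m < c) :
    tally f b c = tally f b m + (if f m = true then 1 else -1) + tally f m c := by
  rw [tally_eq_sum, tally_eq_sum, tally_eq_sum]
  have hu : Finset.Ioo b m ∪ Finset.Ico m c = Finset.Ioo b c := by
    ext x; simp only [Finset.mem_union, Finset.mem_Ioo, Finset.mem_Ico]; omega
  have hd : Disjoint (Finset.Ioo b m) (Finset.Ico m c) := by
    rw [Finset.disjoint_left]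
    intro x hx hx'
    rw [Finset.mem_Ioo] at hx; rw [Finset.mem_Ico] at hx'
    omega
  rw [← hu, Finset.sum_union hd]
  have hins : Finset.Ico m c = insert m (Finset.Ioo m c) := (Finset.Ioo_insert_left h2).symm
  rw [hins, Finset.sum_insert (by simp)]
  ring

/-- let `g` be obtained from `f` by a weight-zero legal move starting at
`a` (the `p`-th largest cross of `f`), and `h` by a weight-zero legal move starting at
`a' < a` (the `r`-th largest cross, `p < r`).  Then `g` and `h` are not connected by a
weight-zero legal move in either direction. -/
theorem stmt10 (f g h : F) (hf : {x : ℤ | f x = true}.Finite)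
    (a b a' b' : ℤ)
    (hg : LegalMove f g a b) (hwg : tally f b a = 0)
    (hh : LegalMove f h a' b') (hwh : tally f b' a' = 0)
    (hlt : a' < a) :
    ¬ ∃ s t : ℤ,
        (LegalMove g h s t ∧ tally g t s = 0) ∨
        (LegalMove h g s t ∧ tally h t s = 0) := by
  obtain ⟨⟨hba, hfa, hfb, _⟩, hgdef⟩ := hg
  obtain ⟨⟨hba', hfa', hfb', _⟩, hhdef⟩ := hh
  -- basic disequalities
  have hane : a ≠ a' := by omega
  have hab : a ≠ b := by omega
  have hab' : a' ≠ b' := by omega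
  have haB' : a ≠ b' := by intro e; rw [e] at hfa; rw [hfa] at hfb'; exact (by simp at hfb')
  have ha'B : a' ≠ b := by intro e; rw [e] at hfa'; rw [hfa'] at hfb; exact (by simp at hfb)
  -- values of g
  have hga : g a = false := by rw [hgdef]; exact move_start f a b hab
  have hgb : g b = true := by rw [hgdef]; exact move_end f a b
  have hgne : ∀ x, x ≠ a → x ≠ b → g x = f x := by
    intro x h1 h2; rw [hgdef]; exact move_ne f a b x h1 h2
  -- values of h
  have hha' : h a' = false := by rw [hhdef]; exact move_start f a' b' hab'
  have hhb' : h b' = true := by rw [hhdef]; exact move_end f a' b'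
  have hhne : ∀ x, x ≠ a' → x ≠ b' → h x = f x := by
    intro x h1 h2; rw [hhdef]; exact move_ne f a' b' x h1 h2
  have hha : h a = true := by rw [hhne a hane haB']; exact hfa
  have hga' : g a' = true := by rw [hgne a' (Ne.symm hane) ha'B]; exact hfa'
  rintro ⟨s, t, hcase⟩
  by_cases hbb : b = b'
  · -- case b = b' : g and h differ exactly at a and a'
    subst hbb
    have hgb' : g b = true := hgb
    have hhb : h b = true := hhb'
    have heq : ∀ x, x ≠ a → x ≠ a' → g x = h x := by
      intro x h1 h2
      by_cases hx : x = b
      · rw [hx, hgb, hhb]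
      · rw [hgne x h1 hx, hhne x h2 hx]
    rcases hcase with ⟨⟨⟨hts, hgs, hgt, _⟩, hhdef2⟩, _⟩ | ⟨⟨⟨hts, hhs, hht, _⟩, hgdef2⟩, hwz⟩
    · -- LegalMove g h s t : forces s = a', t = a, contradicting t < s and a' < a
      have hst : s ≠ t := by omega
      have hhs2 : h s = false := by rw [hhdef2]; exact move_start g s t hst
      have hht2 : h t = true := by rw [hhdef2]; exact move_end g s t
      have hsa' : s = a' := by
        by_contra hne
        have hsa : s ≠ a := by intro e; rw [e, hga] at hgs; simp at hgs
        rw [heq s hsa hne] at hgs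
        rw [hgs] at hhs2; simp at hhs2
      have hta : t = a := by
        by_contra hne
        have hta' : t ≠ a' := by omega
        rw [heq t hne hta'] at hgt
        rw [hgt] at hht2; simp at hht2
      omega
    · -- LegalMove h g s t : forces s = a, t = a'; weight-zero fails
      have hst : s ≠ t := by omega
      have hgs2 : g s = false := by rw [hgdef2]; exact move_start h s t hst
      have hgt2 : g t = true := by rw [hgdef2]; exact move_end h s t
      have hsa : s = a := by
        by_contra hne
        have hsa' : s ≠ a' := by intro e; rw [e, hha'] at hhs; simp at hhs
        rw [← heq s hne hsa'] at hhs
        rw [hhs] at hgs2; simp at hgs2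
      have hta' : t = a' := by
        by_contra hne
        have hta : t ≠ a := by omega
        rw [← heq t hta hne] at hht
        rw [hht] at hgt2; simp at hgt2
      rw [hta', hsa] at hwz
      -- tally h a' a = tally f a' a = -1, contradicting hwz : tally h a' a = 0
      have h1 : tally h a' a = tally f a' a := by
        apply tally_congr
        intro x hx1 hx2
        exact hhne x (by omega) (by omega)
      have h2 : tally f b a = tally f b a' + (if f a' = true then 1 else -1) + tally f a' a :=
        tally_split f b a' a hba' hlt
      rw [hfa'] at h2
      simp only [if_pos rfl] at h2
      rw [hwg, hwh] at h2
      rw [hwz] at h1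
      omega
  · -- case b ≠ b' : g and h differ at the three distinct points a, a', b
      have hda : g a ≠ h a := by rw [hga, hha]; simp
      have hda' : g a' ≠ h a' := by rw [hga', hha']; simp
      have hdb : g b ≠ h b := by
        rw [hgb, hhne b (Ne.symm ha'B) (fun e => hbb e)]
        rw [hfb]; simp
      have heq2 : ∀ x, x ≠ s → x ≠ t → g x = h x := by
        intro x h1 h2
        rcases hcase with ⟨⟨_, hhdef2⟩, _⟩ | ⟨⟨_, hgdef2⟩, _⟩
        · rw [hhdef2]; exact (move_ne g s t x h1 h2).symm
        · rw [hgdef2]; exact move_ne h s t x h1 h2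
      by_cases h1 : a ≠ s ∧ a ≠ t
      · exact hda (heq2 a h1.1 h1.2)
      by_cases h2 : a' ≠ s ∧ a' ≠ t
      · exact hda' (heq2 a' h2.1 h2.2)
      push_neg at h1 h2
      have hbs : b ≠ s ∧ b ≠ t := by
        by_cases e1 : a = s
        · by_cases e2 : a' = s
          · omega
          · have := h2 (fun e => e2 e); constructor <;> omega
        · have ha_t := h1 (fun e => e1 e)
          by_cases e2 : a' = s
          · constructor <;> omega
          · have := h2 (fun e => e2 e); omega
      exact hdb (heq2 b hbs.1 hbs.2)

end KacComb
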